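/- Let f = x^α + x^β be a homogeneous binomial of degree d in 𝔹[x_0,…,x_n], and for e ≥ d let ∼_e be the equivalence relation on Δ^n_e generated by x^{α+γ} ∼_e x^{β+γ} for all x^γ ∈ Δ^n_{e−d}. Then the degree-e piece of the Macaulay tropical ideal [f]_e, defined as the tropical linear space of the transversal matroid presented by the pairs {x^{α+γ}, x^{β+γ}}, equals the submodule of 𝔹^{Δ^n_e} generated by all binomials x^u + x^v with x^u ∼_e x^v and u ≠ v. -/

import Mathlib

/-! STATEMENT 17: Let `f = x^α + x^β` be a homogeneous binomial of degree `d`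
in `𝔹[x_0,…,x_n]` (with `α ≠ β` modeled as multisets of size `d`), and for
`E ≥ d` let `∼_E` be the equivalence relation on the degree-`E` monomials
generated by `x^{α+γ} ∼ x^{β+γ}` for each degree-`(E-d)` monomial `γ`.  Then
the degree-`E` piece of the Macaulay tropical ideal `[f]_E` — the tropical
linear space (cocircuit span) of the transversal matroid presented by the
pairs `{x^{α+γ}, x^{β+γ}}` — equals the submodule of `𝔹^{Δ^n_E}` generated by
the binomials `x^u + x^v` with `x^u ∼_E x^v` and `u ≠ v`. -/

open scoped Classical

noncomputable section

/-- A submodule of `𝔹^ι`: contains `0` and is closed under pointwise `or`. -/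
def IsSubmodB {ι : Type*} (M : Set (ι → Bool)) : Prop :=
  (fun _ => false) ∈ M ∧ ∀ v ∈ M, ∀ w ∈ M, (fun i => v i || w i) ∈ M

/-- The submodule of `𝔹^ι` generated by a set of vectors. -/
def spanB {ι : Type*} (G : Set (ι → Bool)) : Set (ι → Bool) :=
  ⋂₀ {M | IsSubmodB M ∧ G ⊆ M}



namespace TIAux

noncomputable section
variable {G S : Type*}

/-- step function of the alternating walk: move to the other endpoint of the
edge that `φ` uses to cover `y`. -/
def nxt (A B : G → S) (φ : G → S) : S → S := fun y =>
  if h : ∃ γ, φ γ = y then (if y = A h.choose then B h.choose else A h.choose) else y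

variable {A B : G → S} {φ : G → S}

theorem nxt_spec (hφi : Function.Injective φ) (hφc : ∀ γ, φ γ = A γ ∨ φ γ = B γ)
    (hAB : ∀ γ, A γ ≠ B γ) (γ : G) :
    (φ γ = A γ ∧ nxt A B φ (φ γ) = B γ) ∨ (φ γ = B γ ∧ nxt A B φ (φ γ) = A γ) := by
  have h : ∃ γ', φ γ' = φ γ := ⟨γ, rfl⟩
  have he : h.choose = γ := hφi h.choose_spec
  rcases hφc γ with hA | hB
  · left
    refine ⟨hA, ?_⟩
    simp only [nxt, dif_pos h, he, if_pos hA]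
  · right
    refine ⟨hB, ?_⟩
    have : ¬ (φ γ = A γ) := by rw [hB]; exact (hAB γ).symm
    simp only [nxt, dif_pos h, he, if_neg this]

end

end TIAux

namespace TIAux

theorem walk {G S : Type*} [Fintype G] [DecidableEq S]
    {A B : G → S} {c : S → ℤ} {δ : ℤ}
    (hδ : 0 < δ) (hc : ∀ γ, c (B γ) = c (A γ) + δ)
    (hAinj : Function.Injective A) (hBinj : Function.Injective B)
    (C : Finset S) (Y1 : S) (hY1 : Y1 ∉ C)
    (φ : G → S) (hφc : ∀ γ, φ γ = A γ ∨ φ γ = B γ) (hφi : Function.Injective φ)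
    (hφim : Finset.univ.image φ = insert Y1 C) :
    ∃ v, v ≠ Y1 ∧ v ∉ C ∧
      Relation.EqvGen (fun a b => ∃ γ, a = A γ ∧ b = B γ) Y1 v ∧
      (∃ ψ : G → S, (∀ γ, ψ γ = A γ ∨ ψ γ = B γ) ∧ Function.Injective ψ ∧
        Finset.univ.image ψ = insert v C) ∧
      (∀ Y, Y ∉ C →
        (∃ ψ2 : G → S, (∀ γ, ψ2 γ = A γ ∨ ψ2 γ = B γ) ∧ Function.Injective ψ2 ∧
          Finset.univ.image ψ2 = insert Y C) → Y = Y1 ∨ Y = v) := by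
  classical
  have hAB : ∀ γ, A γ ≠ B γ := by
    intro γ h
    have := hc γ
    rw [h] at this
    omega
  have himg : ∀ y, (∃ γ, φ γ = y) ↔ y ∈ insert Y1 C := by
    intro y
    rw [← hφim]
    simp [Finset.mem_image, eq_comm]
  set x : ℕ → S := fun j => (nxt A B φ)^[j] Y1 with hxdef
  have hx0 : x 0 = Y1 := rfl
  have hxs : ∀ j, x (j + 1) = nxt A B φ (x j) := by
    intro j
    simp only [hxdef]
    exact Function.iterate_succ_apply' _ _ _
  have hD0 : ∃ γ, φ γ = x 0 := by
    rw [hx0]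
    exact (himg Y1).mpr (Finset.mem_insert_self _ _)
  have hstep : ∀ j, (∃ γ, φ γ = x j) →
      ∃ γ, φ γ = x j ∧ ((x j = A γ ∧ x (j+1) = B γ) ∨ (x j = B γ ∧ x (j+1) = A γ)) := by
    rintro j ⟨γ, hγ⟩
    refine ⟨γ, hγ, ?_⟩
    have h := nxt_spec hφi hφc hAB γ
    rw [hγ] at h
    rw [hxs j]
    tauto
  have e01 : x (0 + 1) = x 1 := rfl
  -- common difference ε := c (x 1) - c (x 0)
  have hε0 : c (x 1) - c (x 0) = δ ∨ c (x 1) - c (x 0) = -δ := by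
    obtain ⟨γ, hγ, ⟨h1, h2⟩ | ⟨h1, h2⟩⟩ := hstep 0 hD0 <;>
    · have h := hc γ
      rw [← h1, ← h2] at h
      rw [e01] at h
      omega
  have hεne : c (x 1) - c (x 0) ≠ 0 := by omega
  have hmono : ∀ j, (∀ i, i ≤ j → ∃ γ, φ γ = x i) →
      c (x (j+1)) = c (x j) + (c (x 1) - c (x 0)) := by
    intro j
    induction j with
    | zero => intro _; rw [e01]; ring
    | succ j ih =>
      intro hdef
      have hIH : c (x (j+1)) = c (x j) + (c (x 1) - c (x 0)) :=
        ih (fun i hi => hdef i (hi.trans (Nat.le_succ j)))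
      obtain ⟨γ, hγ, hcase⟩ := hstep j (hdef j (Nat.le_succ j))
      obtain ⟨γ', hγ', hcase'⟩ := hstep (j+1) (hdef (j+1) le_rfl)
      rcases hcase with ⟨h1, h2⟩ | ⟨h1, h2⟩
      · rcases hcase' with ⟨h1', h2'⟩ | ⟨h1', h2'⟩
        · have h := hc γ'
          rw [← h1', ← h2'] at h
          have h' := hc γ
          rw [← h1, ← h2] at h'
          omega
        · exfalso
          have hgg : γ' = γ := hBinj (by rw [← h1', ← h2])
          have hxx : x j = x (j+1) := by rw [← hγ, ← hγ', hgg]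
          have h' := hc γ
          rw [← h1, ← h2] at h'
          rw [hxx] at h'
          omega
      · rcases hcase' with ⟨h1', h2'⟩ | ⟨h1', h2'⟩
        · exfalso
          have hgg : γ' = γ := hAinj (by rw [← h1', ← h2])
          have hxx : x j = x (j+1) := by rw [← hγ, ← hγ', hgg]
          have h' := hc γ
          rw [← h2, ← h1] at h'
          rw [hxx] at h'
          omega
        · have h := hc γ'
          rw [← h2', ← h1'] at h
          have h' := hc γ
          rw [← h2, ← h1] at h'
          omega
  have hcval : ∀ j, (∀ i, i < j → ∃ γ, φ γ = x i) →
      c (x j) = c (x 0) + j * (c (x 1) - c (x 0)) := by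
    intro j
    induction j with
    | zero => simp
    | succ j ih =>
      intro hdef
      have h1 : c (x (j+1)) = c (x j) + (c (x 1) - c (x 0)) :=
        hmono j (fun i hi => hdef i (Nat.lt_succ_of_le hi))
      have h2 := ih (fun i hi => hdef i (hi.trans (Nat.lt_succ_self j)))
      rw [h1, h2]
      push_cast
      ring
  have hxinj : ∀ i j, i < j → (∀ l, l < j → ∃ γ, φ γ = x l) → x i ≠ x j := by
    intro i j hij hdef heq
    have hi := hcval i (fun l hl => hdef l (hl.trans hij))
    have hj := hcval j hdef
    rw [heq, hj] at hi
    have hij' : (i : ℤ) * (c (x 1) - c (x 0)) = (j : ℤ) * (c (x 1) - c (x 0)) := by omega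
    have : (i : ℤ) = (j : ℤ) := mul_right_cancel₀ hεne hij'
    have : i = j := by exact_mod_cast this
    omega
  have hterm : ∃ j, 0 < j ∧ x j ∉ C := by
    by_contra h
    push_neg at h
    have hdefall : ∀ j, ∃ γ, φ γ = x j := by
      intro j
      rcases Nat.eq_zero_or_pos j with rfl | hj
      · exact hD0
      · exact (himg _).mpr (Finset.mem_insert_of_mem (h j hj))
    have hinj : Function.Injective (fun i : Fin (C.card + 1) => x ((i : ℕ) + 1)) := by
      intro i i' hh
      rcases lt_trichotomy (i : ℕ) (i' : ℕ) with hlt | heq | hgt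
      · exact absurd hh (hxinj ((i:ℕ)+1) ((i':ℕ)+1) (by omega) (fun l _ => hdefall l))
      · exact Fin.ext heq
      · exact absurd hh.symm (hxinj ((i':ℕ)+1) ((i:ℕ)+1) (by omega) (fun l _ => hdefall l))
    have hsub : Finset.univ.image (fun i : Fin (C.card + 1) => x ((i : ℕ) + 1)) ⊆ C := by
      intro y hy
      simp only [Finset.mem_image] at hy
      obtain ⟨i, _, rfl⟩ := hy
      exact h _ (Nat.succ_pos _)
    have hcard := Finset.card_le_card hsub
    rw [Finset.card_image_of_injective _ hinj, Finset.card_univ, Fintype.card_fin] at hcard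
    omega
  set k := Nat.find hterm with hkdef
  obtain ⟨hkpos, hvC⟩ : 0 < k ∧ x k ∉ C := Nat.find_spec hterm
  have hkmin : ∀ j, 0 < j → j < k → x j ∈ C := by
    intro j hj hjk
    have := Nat.find_min hterm hjk
    push_neg at this
    exact this hj
  have hdefk : ∀ i, i < k → ∃ γ, φ γ = x i := by
    intro i hik
    rcases Nat.eq_zero_or_pos i with rfl | hpos
    · exact hD0
    · exact (himg _).mpr (Finset.mem_insert_of_mem (hkmin i hpos hik))
  have hvY1 : x k ≠ Y1 := by
    intro hv
    have h := hcval k hdefk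
    rw [hv, ← hx0] at h
    have : (k : ℤ) * (c (x 1) - c (x 0)) ≠ 0 :=
      mul_ne_zero (by exact_mod_cast hkpos.ne') hεne
    omega
  have hvnotim : ¬ ∃ γ, φ γ = x k := by
    rw [himg]
    simp [Finset.mem_insert, hvC, hvY1]
  have heqv : ∀ j, j ≤ k → Relation.EqvGen (fun a b => ∃ γ, a = A γ ∧ b = B γ) Y1 (x j) := by
    intro j
    induction j with
    | zero => intro _; rw [hx0]; exact Relation.EqvGen.refl Y1
    | succ j ih =>
      intro hjk
      have h1 := ih (Nat.le_of_succ_le hjk)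
      obtain ⟨γ, hγ, hcase⟩ := hstep j (hdefk j (Nat.lt_of_succ_le hjk))
      rcases hcase with ⟨ha, hb⟩ | ⟨ha, hb⟩
      · exact Relation.EqvGen.trans _ _ _ h1 (Relation.EqvGen.rel _ _ ⟨γ, ha, hb⟩)
      · exact Relation.EqvGen.trans _ _ _ h1
          (Relation.EqvGen.symm _ _ (Relation.EqvGen.rel _ _ ⟨γ, hb, ha⟩))
  -- the shifted choice function
  set ψ : G → S := fun γ => if ∃ i, i < k ∧ φ γ = x i then nxt A B φ (φ γ) else φ γ
    with hψdef
  have hψ1 : ∀ γ i, i < k → φ γ = x i → ψ γ = x (i+1) := by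
    intro γ i hik hφγ
    have hcond : ∃ i', i' < k ∧ φ γ = x i' := ⟨i, hik, hφγ⟩
    simp only [hψdef, if_pos hcond]
    rw [hφγ, ← hxs]
  have hψ2 : ∀ γ, (¬ ∃ i, i < k ∧ φ γ = x i) → ψ γ = φ γ := by
    intro γ hcond
    simp only [hψdef, if_neg hcond]
  have hψc : ∀ γ, ψ γ = A γ ∨ ψ γ = B γ := by
    intro γ
    by_cases hcond : ∃ i, i < k ∧ φ γ = x i
    · have : ψ γ = nxt A B φ (φ γ) := by simp only [hψdef, if_pos hcond]
      rw [this]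
      rcases nxt_spec hφi hφc hAB γ with ⟨_, h⟩ | ⟨_, h⟩
      · right; exact h
      · left; exact h
    · rw [hψ2 γ hcond]; exact hφc γ
  have hψi : Function.Injective ψ := by
    intro γ γ' heq
    by_cases h1 : ∃ i, i < k ∧ φ γ = x i <;> by_cases h2 : ∃ i', i' < k ∧ φ γ' = x i'
    · obtain ⟨i, hik, hi⟩ := h1
      obtain ⟨i', hik', hi'⟩ := h2
      rw [hψ1 γ i hik hi, hψ1 γ' i' hik' hi'] at heq
      have hii : i = i' := by
        by_contra hne'
        rcases Nat.lt_or_ge i i' with hlt | hge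
        · exact hxinj (i+1) (i'+1) (by omega) (fun l hl => hdefk l (by omega)) heq
        · have : i' < i := by omega
          exact hxinj (i'+1) (i+1) (by omega) (fun l hl => hdefk l (by omega)) heq.symm
      apply hφi
      rw [hi, hi', hii]
    · obtain ⟨i, hik, hi⟩ := h1
      rw [hψ1 γ i hik hi, hψ2 γ' h2] at heq
      rcases Nat.lt_or_ge (i+1) k with hlt | hge
      · exact absurd ⟨i+1, hlt, heq.symm⟩ h2
      · have hik' : i + 1 = k := by omega
        rw [hik'] at heq
        exact absurd ⟨γ', heq.symm⟩ hvnotim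
    · obtain ⟨i, hik, hi⟩ := h2
      rw [hψ1 γ' i hik hi, hψ2 γ h1] at heq
      rcases Nat.lt_or_ge (i+1) k with hlt | hge
      · exact absurd ⟨i+1, hlt, heq⟩ h1
      · have hik' : i + 1 = k := by omega
        rw [hik'] at heq
        exact absurd ⟨γ, heq⟩ hvnotim
    · rw [hψ2 _ h1, hψ2 _ h2] at heq
      exact hφi heq
  have hψim : Finset.univ.image ψ = insert (x k) C := by
    ext y
    simp only [Finset.mem_image, Finset.mem_univ, true_and, Finset.mem_insert]
    constructor
    · rintro ⟨γ, rfl⟩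
      by_cases hcond : ∃ i, i < k ∧ φ γ = x i
      · obtain ⟨i, hik, hi⟩ := hcond
        rw [hψ1 γ i hik hi]
        rcases Nat.lt_or_ge (i+1) k with hlt | hge
        · right; exact hkmin (i+1) (Nat.succ_pos i) hlt
        · left
          have : i + 1 = k := by omega
          rw [this]
      · rw [hψ2 γ hcond]
        have hmem : φ γ ∈ insert Y1 C := (himg _).mp ⟨γ, rfl⟩
        rcases Finset.mem_insert.mp hmem with h | h
        · exact absurd ⟨0, hkpos, by rw [h, hx0]⟩ hcond
        · right; exact h
    · rintro (rfl | hyC)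
      · obtain ⟨k', hk'⟩ : ∃ k', k = k' + 1 := ⟨k - 1, by omega⟩
        obtain ⟨γ, hγ⟩ := hdefk k' (by omega)
        refine ⟨γ, ?_⟩
        rw [hk']
        exact hψ1 γ k' (by omega) hγ
      · by_cases hcond : ∃ i, i < k ∧ y = x i
        · obtain ⟨i, hik, rfl⟩ := hcond
          obtain ⟨i', rfl⟩ : ∃ i', i = i' + 1 := by
            rcases Nat.eq_zero_or_pos i with rfl | hpos
            · rw [hx0] at hyC; exact absurd hyC hY1
            · exact ⟨i - 1, by omega⟩
          obtain ⟨γ, hγ⟩ := hdefk i' (by omega)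
          exact ⟨γ, hψ1 γ i' (by omega) hγ⟩
        · obtain ⟨γ, hγ⟩ := (himg y).mpr (Finset.mem_insert_of_mem hyC)
          refine ⟨γ, ?_⟩
          rw [hψ2 γ ?_, hγ]
          rintro ⟨i, hik, hxi⟩
          exact hcond ⟨i, hik, by rw [← hγ, hxi]⟩
  refine ⟨x k, hvY1, hvC, heqv k le_rfl, ⟨ψ, hψc, hψi, hψim⟩, ?_⟩
  rintro Y hYC ⟨ψ2, hψ2c, hψ2i, hψ2im⟩
  by_cases hYY1 : Y = Y1
  · left; exact hYY1
  right
  have himg2 : ∀ y, (∃ γ, ψ2 γ = y) ↔ y ∈ insert Y C := by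
    intro y
    rw [← hψ2im]
    simp [Finset.mem_image, eq_comm]
  have hY1notim2 : ¬ ∃ γ, ψ2 γ = Y1 := by
    rw [himg2]
    simp only [Finset.mem_insert, not_or]
    exact ⟨fun h => hYY1 h.symm, hY1⟩
  have hQ : ∀ j, j < k → ∀ γ, φ γ = x j → ψ2 γ = x (j+1) := by
    intro j
    induction j with
    | zero =>
      intro h0k γ hγ
      have hcase := nxt_spec hφi hφc hAB γ
      rw [hγ] at hcase
      rcases hψ2c γ with h | h <;> rcases hcase with ⟨h1, h2⟩ | ⟨h1, h2⟩
      · exact absurd ⟨γ, by rw [h, ← h1, hx0]⟩ hY1notim2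
      · rw [h, ← h2, ← hxs]
      · rw [h, ← h2, ← hxs]
      · exact absurd ⟨γ, by rw [h, ← h1, hx0]⟩ hY1notim2
    | succ j ih =>
      intro hjk γ hγ
      obtain ⟨γp, hγp⟩ := hdefk j (by omega)
      have hIH : ψ2 γp = x (j+1) := ih (by omega) γp hγp
      have hne12 : γ ≠ γp := by
        intro h
        exact hxinj j (j+1) (Nat.lt_succ_self j) (fun l hl => hdefk l (by omega))
          (by rw [← hγp, ← hγ, h])
      have hcase := nxt_spec hφi hφc hAB γ
      rw [hγ] at hcase
      rcases hψ2c γ with h | h <;> rcases hcase with ⟨h1, h2⟩ | ⟨h1, h2⟩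
      · exact absurd (hψ2i (by rw [h, ← h1, hIH])) hne12
      · rw [h, ← h2, ← hxs]
      · rw [h, ← h2, ← hxs]
      · exact absurd (hψ2i (by rw [h, ← h1, hIH])) hne12
  obtain ⟨k', hk'⟩ : ∃ k', k = k' + 1 := ⟨k - 1, by omega⟩
  obtain ⟨γ, hγ⟩ := hdefk k' (by omega)
  have hψ2γ : ψ2 γ = x (k'+1) := hQ k' (by omega) γ hγ
  have hmem : x (k'+1) ∈ insert Y C := (himg2 _).mp ⟨γ, hψ2γ⟩
  rw [← hk'] at hmem
  rcases Finset.mem_insert.mp hmem with h | h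
  · exact h.symm
  · exact absurd h hvC

end TIAux

namespace TIAux

variable {G S : Type*}

/-- the one-step relation `γ+α ∼ γ+β`. -/
def Rel (A B : G → S) : S → S → Prop := fun a b => ∃ γ, a = A γ ∧ b = B γ

variable {A B : G → S} {c : S → ℤ} {δ : ℤ}

theorem rtg_le (hc : ∀ γ, c (B γ) = c (A γ) + δ) (hδ : 0 < δ) {a b : S}
    (h : Relation.ReflTransGen (Rel A B) a b) : c a ≤ c b := by
  induction h with
  | refl => exact le_rfl
  | tail _ hstep ih =>
    obtain ⟨γ, e1, e2⟩ := hstep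
    have := hc γ
    rw [← e1, ← e2] at this
    omega

theorem rtg_lt (hc : ∀ γ, c (B γ) = c (A γ) + δ) (hδ : 0 < δ) {a b : S}
    (h : Relation.ReflTransGen (Rel A B) a b) (hne : a ≠ b) : c a < c b := by
  rcases h.cases_head with rfl | ⟨m, hr, htail⟩
  · exact absurd rfl hne
  · obtain ⟨γ, e1, e2⟩ := hr
    have h1 := hc γ
    rw [← e1, ← e2] at h1
    have h2 := rtg_le hc hδ htail
    omega

theorem rtg_antisymm (hc : ∀ γ, c (B γ) = c (A γ) + δ) (hδ : 0 < δ) {a b : S}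
    (h1 : Relation.ReflTransGen (Rel A B) a b)
    (h2 : Relation.ReflTransGen (Rel A B) b a) : a = b := by
  by_contra hne
  have := rtg_lt hc hδ h1 hne
  have := rtg_lt hc hδ h2 (Ne.symm hne)
  omega

theorem rtg_comp_down (hBinj : Function.Injective B) {w a b : S}
    (ha : Relation.ReflTransGen (Rel A B) a w) :
    Relation.ReflTransGen (Rel A B) b w →
    Relation.ReflTransGen (Rel A B) a b ∨ Relation.ReflTransGen (Rel A B) b a := by
  induction ha with
  | refl => intro hb; right; exact hb
  | tail h1 hstep ih =>
    intro hb
    rcases hb.cases_tail with heq | ⟨m, hbm, hmw⟩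
    · left
      rw [← heq]
      exact h1.tail hstep
    · obtain ⟨γ, e1, e2⟩ := hmw
      obtain ⟨γ', e1', e2'⟩ := hstep
      have hγ : γ = γ' := hBinj (by rw [← e2, ← e2'])
      exact ih (by rwa [e1', ← hγ, ← e1])

theorem rtg_comp_up (hAinj : Function.Injective A) {v u w : S}
    (h : Relation.ReflTransGen (Rel A B) v u) :
    Relation.ReflTransGen (Rel A B) v w →
    Relation.ReflTransGen (Rel A B) u w ∨ Relation.ReflTransGen (Rel A B) w u := by
  induction h using Relation.ReflTransGen.head_induction_on with
  | refl => intro h; left; exact h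
  | head hstep h1 ih =>
    intro hvw
    rcases hvw.cases_head with heq | ⟨m', hm', hm'w⟩
    · right
      rw [← heq]
      exact Relation.ReflTransGen.head hstep h1
    · obtain ⟨γ, e1, e2⟩ := hstep
      obtain ⟨γ', e1', e2'⟩ := hm'
      have hγ : γ = γ' := hAinj (by rw [← e1, ← e1'])
      exact ih (by rwa [e2, hγ, ← e2'])

theorem eqvGen_rtg (hAinj : Function.Injective A) (hBinj : Function.Injective B)
    {u v : S} (h : Relation.EqvGen (Rel A B) u v) :
    Relation.ReflTransGen (Rel A B) u v ∨ Relation.ReflTransGen (Rel A B) v u := by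
  induction h with
  | rel a b hr => left; exact Relation.ReflTransGen.single hr
  | refl a => left; exact Relation.ReflTransGen.refl
  | symm a b _ ih => exact ih.symm
  | trans a b e _ _ ih1 ih2 =>
    rcases ih1 with h1 | h1 <;> rcases ih2 with h2 | h2
    · left; exact h1.trans h2
    · exact rtg_comp_down hBinj h1 h2
    · exact rtg_comp_up hAinj h1 h2
    · right; exact h2.trans h1

end TIAux

namespace TIAux

variable {G S : Type*} {A B : G → S} {c : S → ℤ} {δ : ℤ}

theorem pair_basis [Fintype G] [DecidableEq S]
    (hδ : 0 < δ) (hc : ∀ γ, c (B γ) = c (A γ) + δ)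
    (hAinj : Function.Injective A) (hBinj : Function.Injective B)
    {u v : S} (huv : Relation.ReflTransGen (Rel A B) u v) (hne : u ≠ v) :
    ∃ φ ψ : G → S,
      (∀ γ, φ γ = A γ ∨ φ γ = B γ) ∧ Function.Injective φ ∧
      (∀ γ, ψ γ = A γ ∨ ψ γ = B γ) ∧ Function.Injective ψ ∧
      u ∈ Finset.univ.image φ ∧ v ∉ Finset.univ.image φ ∧
      Finset.univ.image ψ = insert v ((Finset.univ.image φ).erase u) := by
  classical
  set φ : G → S := fun γ => if Relation.ReflTransGen (Rel A B) (B γ) v then A γ else B γ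
    with hφdef
  set ψ : G → S := fun γ => if Relation.ReflTransGen (Rel A B) (B γ) u then A γ else B γ
    with hψdef
  -- generic facts about this construction
  have hchoice : ∀ t : S, ∀ γ,
      (if Relation.ReflTransGen (Rel A B) (B γ) t then A γ else B γ) = A γ ∨
      (if Relation.ReflTransGen (Rel A B) (B γ) t then A γ else B γ) = B γ := by
    intro t γ
    by_cases h : Relation.ReflTransGen (Rel A B) (B γ) t
    · left; rw [if_pos h]
    · right; rw [if_neg h]
  have hinj : ∀ t : S, Function.Injective
      (fun γ => if Relation.ReflTransGen (Rel A B) (B γ) t then A γ else B γ) := by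
    intro t γ γ' h
    simp only at h
    by_cases c1 : Relation.ReflTransGen (Rel A B) (B γ) t <;>
      by_cases c2 : Relation.ReflTransGen (Rel A B) (B γ') t
    · rw [if_pos c1, if_pos c2] at h
      exact hAinj h
    · rw [if_pos c1, if_neg c2] at h
      -- h : A γ = B γ', so Rel (B γ') (B γ), hence RTG (B γ') t : contra c2
      exact absurd ((Relation.ReflTransGen.single ⟨γ, h.symm, rfl⟩).trans c1) c2
    · rw [if_neg c1, if_pos c2] at h
      exact absurd ((Relation.ReflTransGen.single ⟨γ', h, rfl⟩).trans c2) c1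
    · rw [if_neg c1, if_neg c2] at h
      exact hBinj h
  have hnotmem : ∀ t : S, ∀ γ,
      (if Relation.ReflTransGen (Rel A B) (B γ) t then A γ else B γ) ≠ t := by
    intro t γ h
    by_cases hcond : Relation.ReflTransGen (Rel A B) (B γ) t
    · rw [if_pos hcond] at h
      have h1 := rtg_le hc hδ hcond
      have h2 := hc γ
      rw [h] at h2
      omega
    · rw [if_neg hcond] at h
      exact hcond (h ▸ Relation.ReflTransGen.refl)
  have hvu : ¬ Relation.ReflTransGen (Rel A B) v u := by
    intro h
    exact hne (rtg_antisymm hc hδ huv h)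
  -- u ∈ image φ
  have humem : u ∈ Finset.univ.image φ := by
    rcases huv.cases_head with heq | ⟨m, ⟨γ, e1, e2⟩, hmv⟩
    · exact absurd heq hne
    · have hpos : Relation.ReflTransGen (Rel A B) (B γ) v := by rwa [← e2]
      refine Finset.mem_image.mpr ⟨γ, Finset.mem_univ _, ?_⟩
      rw [hφdef]
      simp only [if_pos hpos]
      exact e1.symm
  -- v ∈ image ψ
  have hvmem : v ∈ Finset.univ.image ψ := by
    rcases huv.cases_tail with heq | ⟨m, hum, ⟨γ, e1, e2⟩⟩
    · exact absurd heq.symm hne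
    · have hneg : ¬ Relation.ReflTransGen (Rel A B) (B γ) u := by rwa [← e2]
      refine Finset.mem_image.mpr ⟨γ, Finset.mem_univ _, ?_⟩
      rw [hψdef]
      simp only [if_neg hneg]
      exact e2.symm
  have hvnot : v ∉ Finset.univ.image φ := by
    rw [Finset.mem_image]
    rintro ⟨γ, -, hγ⟩
    exact hnotmem v γ hγ
  have hunot : u ∉ Finset.univ.image ψ := by
    rw [Finset.mem_image]
    rintro ⟨γ, -, hγ⟩
    exact hnotmem u γ hγ
  refine ⟨φ, ψ, hchoice v, hinj v, hchoice u, hinj u, humem, hvnot, ?_⟩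
  ext y
  simp only [Finset.mem_insert, Finset.mem_erase, Finset.mem_image, Finset.mem_univ, true_and]
  constructor
  · rintro ⟨γ, rfl⟩
    by_cases hyv : ψ γ = v
    · left; exact hyv
    right
    refine ⟨hnotmem u γ, ?_⟩
    by_cases cu : Relation.ReflTransGen (Rel A B) (B γ) u
    · have cv : Relation.ReflTransGen (Rel A B) (B γ) v := cu.trans huv
      refine ⟨γ, ?_⟩
      rw [hφdef]
      simp only [if_pos cv]
      rw [hψdef]
      simp only [if_pos cu]
    · have hψγ : ψ γ = B γ := by rw [hψdef]; simp only [if_neg cu]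
      by_cases cv : Relation.ReflTransGen (Rel A B) (B γ) v
      · -- ψ γ = B γ ≠ v, and B γ →* v, take the edge just above B γ
        rcases cv.cases_head with heq | ⟨m, ⟨γ'', e1'', e2''⟩, hmv⟩
        · exact absurd (hψγ.trans heq) hyv
        · have hpos : Relation.ReflTransGen (Rel A B) (B γ'') v := by rwa [← e2'']
          refine ⟨γ'', ?_⟩
          rw [hφdef]
          simp only [if_pos hpos]
          rw [hψγ, e1'']
      · refine ⟨γ, ?_⟩
        rw [hφdef]
        simp only [if_neg cv]
        exact hψγ.symm
  · rintro (rfl | ⟨hyu, γ, rfl⟩)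
    · exact Finset.mem_image.mp hvmem |>.imp (fun γ h => h.2)
    · by_cases cv : Relation.ReflTransGen (Rel A B) (B γ) v
      · have hφγ : φ γ = A γ := by rw [hφdef]; simp only [if_pos cv]
        by_cases cu : Relation.ReflTransGen (Rel A B) (B γ) u
        · refine ⟨γ, ?_⟩
          rw [hψdef]
          simp only [if_pos cu]
          exact hφγ.symm ▸ hφγ
        · -- φ γ = A γ ≠ u; compare A γ with u
          rw [hφγ] at hyu ⊢
          have hAv : Relation.ReflTransGen (Rel A B) (A γ) v :=
            (Relation.ReflTransGen.single ⟨γ, rfl, rfl⟩).trans cv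
          rcases rtg_comp_down hBinj hAv huv with hAu | huA
          · -- RTG (A γ) u with A γ ≠ u : first step must be B γ, contra cu
            exfalso
            rcases hAu.cases_head with heq | ⟨m, ⟨γ0, e1, e2⟩, hmu⟩
            · exact hyu heq
            · have : γ0 = γ := hAinj e1.symm
              rw [this] at e2
              exact cu (by rwa [← e2])
          · -- RTG u (A γ), u ≠ A γ: last step into A γ is some B γ'
            rcases huA.cases_tail with heq | ⟨m, hum, ⟨γ', e1', e2'⟩⟩
            · exact absurd heq hyu
            · have hBu : ¬ Relation.ReflTransGen (Rel A B) (B γ') u := by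
                rw [← e2']
                intro h
                exact hyu (rtg_antisymm hc hδ h huA)
              refine ⟨γ', ?_⟩
              rw [hψdef]
              simp only [if_neg hBu]
              exact e2'.symm
      · have hφγ : φ γ = B γ := by rw [hφdef]; simp only [if_neg cv]
        have cu : ¬ Relation.ReflTransGen (Rel A B) (B γ) u := fun h => cv (h.trans huv)
        refine ⟨γ, ?_⟩
        rw [hψdef]
        simp only [if_neg cu]
        exact hφγ.symm ▸ hφγ

end TIAux


theorem isSubmod_spanB {ι : Type*} (Gs : Set (ι → Bool)) : IsSubmodB (spanB Gs) := by
  constructor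
  · exact Set.mem_sInter.mpr fun M hM => hM.1.1
  · intro v hv w hw
    exact Set.mem_sInter.mpr fun M hM =>
      hM.1.2 v (Set.mem_sInter.mp hv M hM) w (Set.mem_sInter.mp hw M hM)

theorem subset_spanB {ι : Type*} {Gs : Set (ι → Bool)} : Gs ⊆ spanB Gs :=
  fun _ hg => Set.mem_sInter.mpr fun _ hM => hM.2 hg

theorem spanB_le {ι : Type*} {Gs M : Set (ι → Bool)} (hM : IsSubmodB M) (hG : Gs ⊆ M) :
    spanB Gs ⊆ M :=
  fun _ hg => Set.mem_sInter.mp hg M ⟨hM, hG⟩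

variable {n d E : ℕ}

/-- `B` is a basis of the transversal matroid presented by the pairs
`{γ + α, γ + β}`, `γ` ranging over the degree-`(E-d)` monomials: `B` is the
image of an injective choice function picking one element of each pair. -/
def IsTransvBasis (α β : Multiset (Fin (n + 1)))
    (B : Finset (Sym (Fin (n + 1)) E)) : Prop :=
  ∃ φ : Sym (Fin (n + 1)) (E - d) → Sym (Fin (n + 1)) E,
    Function.Injective φ ∧
    (∀ γ, (φ γ).toMultiset = γ.toMultiset + α ∨
          (φ γ).toMultiset = γ.toMultiset + β) ∧
    B = Finset.univ.image φ

theorem binomial_macaulay_piece_eq_equivalence_span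
    (hdE : d ≤ E) (α β : Multiset (Fin (n + 1)))
    (hα : Multiset.card α = d) (hβ : Multiset.card β = d) (hne : α ≠ β) :
    -- the cocircuit span of the transversal matroid (of rank
    -- `|Δ^n_{E-d}|`) presented by the pairs `{γ+α, γ+β}` ...
    spanB {g : Sym (Fin (n + 1)) E → Bool |
        ∃ C : Finset (Sym (Fin (n + 1)) E),
          C.card = Fintype.card (Sym (Fin (n + 1)) (E - d)) - 1 ∧
          g = fun Y => decide (Y ∉ C ∧
            IsTransvBasis (n := n) (d := d) α β (insert Y C))} =
      -- ... equals the span of the binomials supported on `∼_E`-classes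
      spanB {g : Sym (Fin (n + 1)) E → Bool |
        ∃ u v : Sym (Fin (n + 1)) E, u ≠ v ∧
          Relation.EqvGen
            (fun a b => ∃ γ : Sym (Fin (n + 1)) (E - d),
              a.toMultiset = γ.toMultiset + α ∧
              b.toMultiset = γ.toMultiset + β) u v ∧
          g = fun Y => decide (Y = u ∨ Y = v)} := by

  classical
  obtain ⟨i₀, hi₀⟩ : ∃ i, α.count i < β.count i := by
    by_contra h
    push_neg at h
    have hle : β ≤ α := Multiset.le_iff_count.mpr h
    have hba : β = α := Multiset.eq_of_le_of_card_le hle (by rw [hα, hβ])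
    exact hne hba.symm
  have hcard : ∀ γ : Sym (Fin (n+1)) (E - d), ∀ m : Multiset (Fin (n+1)),
      Multiset.card m = d → Multiset.card (γ.toMultiset + m) = E := by
    intro γ m hm
    rw [Multiset.card_add, Sym.card_coe, hm]
    exact Nat.sub_add_cancel hdE
  set A : Sym (Fin (n+1)) (E-d) → Sym (Fin (n+1)) E :=
    fun γ => ⟨γ.toMultiset + α, hcard γ α hα⟩ with hAdef
  set Bm : Sym (Fin (n+1)) (E-d) → Sym (Fin (n+1)) E :=
    fun γ => ⟨γ.toMultiset + β, hcard γ β hβ⟩ with hBmdef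
  have hAcoe : ∀ γ, (A γ).toMultiset = γ.toMultiset + α := fun γ => rfl
  have hBcoe : ∀ γ, (Bm γ).toMultiset = γ.toMultiset + β := fun γ => rfl
  have hAinj : Function.Injective A := by
    intro γ γ' h
    apply Sym.coe_injective
    have h2 := congrArg Sym.toMultiset h
    rw [hAcoe, hAcoe] at h2
    exact add_right_cancel h2
  have hBinj : Function.Injective Bm := by
    intro γ γ' h
    apply Sym.coe_injective
    have h2 := congrArg Sym.toMultiset h
    rw [hBcoe, hBcoe] at h2
    exact add_right_cancel h2
  set c : Sym (Fin (n + 1)) E → ℤ := fun y => (Multiset.count i₀ y.toMultiset : ℤ) with hcdef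
  set δ' : ℤ := (Multiset.count i₀ β : ℤ) - (Multiset.count i₀ α : ℤ) with hδ'def
  have hδ : 0 < δ' := by rw [hδ'def]; omega
  have hc : ∀ γ, c (Bm γ) = c (A γ) + δ' := by
    intro γ
    have h1 : c (Bm γ) = ((γ.toMultiset + β).count i₀ : ℤ) := rfl
    have h2 : c (A γ) = ((γ.toMultiset + α).count i₀ : ℤ) := rfl
    rw [h1, h2, hδ'def]
    simp only [Multiset.count_add]
    push_cast
    ring
  have hbasis_iff : ∀ Bs : Finset (Sym (Fin (n+1)) E),
      IsTransvBasis (n := n) (d := d) α β Bs ↔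
      ∃ φ : Sym (Fin (n+1)) (E-d) → Sym (Fin (n+1)) E, Function.Injective φ ∧
        (∀ γ, φ γ = A γ ∨ φ γ = Bm γ) ∧ Bs = Finset.univ.image φ := by
    intro Bs
    constructor
    · rintro ⟨φ, h1, h2, h3⟩
      refine ⟨φ, h1, fun γ => ?_, h3⟩
      rcases h2 γ with h | h
      · left; exact Sym.coe_injective (h.trans (hAcoe γ).symm)
      · right; exact Sym.coe_injective (h.trans (hBcoe γ).symm)
    · rintro ⟨φ, h1, h2, h3⟩
      refine ⟨φ, h1, fun γ => ?_, h3⟩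
      rcases h2 γ with h | h
      · left; simp only [h, hAcoe]
      · right; simp only [h, hBcoe]
  have toR : ∀ a b : Sym (Fin (n+1)) E, TIAux.Rel A Bm a b →
      (∃ γ : Sym (Fin (n+1)) (E-d),
        a.toMultiset = γ.toMultiset + α ∧ b.toMultiset = γ.toMultiset + β) := by
    rintro a b ⟨γ, rfl, rfl⟩
    exact ⟨γ, hAcoe γ, hBcoe γ⟩
  have fromR : ∀ a b : Sym (Fin (n+1)) E,
      (∃ γ : Sym (Fin (n+1)) (E-d),
        a.toMultiset = γ.toMultiset + α ∧ b.toMultiset = γ.toMultiset + β) →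
      TIAux.Rel A Bm a b := by
    rintro a b ⟨γ, h1, h2⟩
    exact ⟨γ, Sym.coe_injective (h1.trans (hAcoe γ).symm),
      Sym.coe_injective (h2.trans (hBcoe γ).symm)⟩
  have key : ∀ u v : Sym (Fin (n+1)) E, u ≠ v →
      Relation.ReflTransGen (TIAux.Rel A Bm) u v →
      ∃ C : Finset (Sym (Fin (n+1)) E),
        C.card = Fintype.card (Sym (Fin (n+1)) (E-d)) - 1 ∧
        ∀ Y, (Y ∉ C ∧ IsTransvBasis (n := n) (d := d) α β (insert Y C)) ↔
          (Y = u ∨ Y = v) := by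
    intro u v huv hrtg
    obtain ⟨φ, ψ, hφc, hφi, hψc, hψi, humem, hvnot, himeq⟩ :=
      TIAux.pair_basis hδ hc hAinj hBinj hrtg huv
    refine ⟨(Finset.univ.image φ).erase u, ?_, ?_⟩
    · rw [Finset.card_erase_of_mem humem, Finset.card_image_of_injective _ hφi,
        Finset.card_univ]
    · have huC : u ∉ (Finset.univ.image φ).erase u := Finset.notMem_erase _ _
      have himφ : Finset.univ.image φ = insert u ((Finset.univ.image φ).erase u) :=
        (Finset.insert_erase humem).symm
      have hvC : v ∉ (Finset.univ.image φ).erase u :=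
        fun h => hvnot (Finset.mem_of_mem_erase h)
      obtain ⟨v', hv'u, hv'C, -, -, huniq⟩ :=
        TIAux.walk hδ hc hAinj hBinj ((Finset.univ.image φ).erase u) u huC φ hφc hφi himφ
      have hvv' : v = v' := by
        rcases huniq v hvC ⟨ψ, hψc, hψi, himeq⟩ with h | h
        · exact absurd h (Ne.symm huv)
        · exact h
      intro Y
      constructor
      · rintro ⟨hYC, hYb⟩
        obtain ⟨ψ2, h1, h2, h3⟩ := (hbasis_iff _).mp hYb
        rcases huniq Y hYC ⟨ψ2, h2, h1, h3.symm⟩ with h | h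
        · left; exact h
        · right; rw [h, ← hvv']
      · rintro (rfl | rfl)
        · exact ⟨huC, (hbasis_iff _).mpr ⟨φ, hφi, hφc, himφ.symm⟩⟩
        · exact ⟨hvC, (hbasis_iff _).mpr ⟨ψ, hψi, hψc, himeq.symm⟩⟩
  apply Set.Subset.antisymm
  · apply spanB_le (isSubmod_spanB _)
    rintro g ⟨C, hcardC, rfl⟩
    by_cases hex : ∃ Y, Y ∉ C ∧ IsTransvBasis (n := n) (d := d) α β (insert Y C)
    · obtain ⟨Y1, hY1C, hb⟩ := hex
      obtain ⟨φ, hφi, hφc, hφim⟩ := (hbasis_iff _).mp hb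
      obtain ⟨v, hvY1, hvC, heqvw, ⟨ψ, hψc, hψi, hψim⟩, huniq⟩ :=
        TIAux.walk hδ hc hAinj hBinj C Y1 hY1C φ hφc hφi hφim.symm
      apply subset_spanB
      refine ⟨Y1, v, Ne.symm hvY1, Relation.EqvGen.mono toR _ _ heqvw, ?_⟩
      funext Y
      rw [decide_eq_decide]
      constructor
      · rintro ⟨hYC, hYb⟩
        obtain ⟨ψ2, h1, h2, h3⟩ := (hbasis_iff _).mp hYb
        exact huniq Y hYC ⟨ψ2, h2, h1, h3.symm⟩
      · rintro (rfl | rfl)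
        · exact ⟨hY1C, hb⟩
        · exact ⟨hvC, (hbasis_iff _).mpr ⟨ψ, hψi, hψc, hψim.symm⟩⟩
    · have hzero : (fun Y => decide (Y ∉ C ∧
          IsTransvBasis (n := n) (d := d) α β (insert Y C)))
          = (fun _ : Sym (Fin (n+1)) E => false) := by
        funext Y
        apply decide_eq_false
        intro h
        exact hex ⟨Y, h⟩
      rw [hzero]
      exact (isSubmod_spanB _).1
  · apply spanB_le (isSubmod_spanB _)
    rintro g ⟨u, v, huv, heqvs, rfl⟩
    have heqv' : Relation.EqvGen (TIAux.Rel A Bm) u v := Relation.EqvGen.mono fromR _ _ heqvs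
    apply subset_spanB
    rcases TIAux.eqvGen_rtg hAinj hBinj heqv' with hrtg | hrtg
    · obtain ⟨C, hC1, hC2⟩ := key u v huv hrtg
      refine ⟨C, hC1, ?_⟩
      funext Y
      rw [decide_eq_decide]
      exact (hC2 Y).symm
    · obtain ⟨C, hC1, hC2⟩ := key v u (Ne.symm huv) hrtg
      refine ⟨C, hC1, ?_⟩
      funext Y
      rw [decide_eq_decide]
      exact ((hC2 Y).trans or_comm).symm


end
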